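/- Let M be a complete metric space which has the approximate midpoint property and the finite binary intersection property. Then M has exact midpoints: for all x, y ∈ M there exists z ∈ M with d(x,z) = d(y,z) = d(x,y)/2. (In particular, M is a geodesic space.) -/

import Mathlib

/-- Iterated approximate midpoints: points at approximately any prescribed
distance along an approximate geodesic, with error `dist u v / 2 ^ n`. -/
lemma approx_point {M : Type*} [MetricSpace M]
    (hmid : ∀ x y : M, ∀ ε : ℝ, 0 < ε →
      ∃ z : M, dist x z ≤ dist x y / 2 + ε ∧ dist y z ≤ dist x y / 2 + ε) :
    ∀ (n : ℕ) (u v : M) (ρ η : ℝ), 0 ≤ ρ → 0 < η →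
      ∃ w : M, dist u w ≤ ρ + η ∧
        dist v w ≤ max (dist u v - ρ) 0 + dist u v / 2 ^ n + η := by
  intro n
  induction n with
  | zero =>
    intro u v ρ η hρ hη
    refine ⟨u, by simpa using le_of_lt (lt_of_le_of_lt hρ (lt_add_of_pos_right ρ hη)), ?_⟩
    rw [dist_comm v u]
    have h0 : (0:ℝ) ≤ max (dist u v - ρ) 0 := le_max_right _ _
    simp only [pow_zero, div_one]
    linarith
  | succ n ih =>
    intro u v ρ η hρ hη
    set D := dist u v with hD
    have hD0 : 0 ≤ D := dist_nonneg
    obtain ⟨m, hm1, hm2⟩ := hmid u v (η/8) (by linarith)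
    rcases le_or_gt ρ (D/2) with hc | hc
    · -- recurse on (u, m)
      obtain ⟨w, hw1, hw2⟩ := ih u m ρ (η/8) hρ (by linarith)
      refine ⟨w, by linarith, ?_⟩
      have h1 : dist v w ≤ dist v m + dist m w := dist_triangle v m w
      have h2 : max (dist u m - ρ) 0 ≤ D/2 + η/8 - ρ := by
        apply max_le (by linarith) (by linarith)
      have h3 : dist u m / 2 ^ n ≤ (D/2 + η/8) / 2 ^ n :=
        div_le_div_of_nonneg_right hm1 (by positivity)
      have h4 : (D/2) / 2 ^ n = D / 2 ^ (n+1) := by ring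
      have h5 : (η/8) / 2 ^ n ≤ η/8 :=
        div_le_self (by linarith) (one_le_pow₀ (by norm_num))
      have h6 : max (D - ρ) 0 ≥ D - ρ := le_max_left _ _
      have h7 : (D/2 + η/8) / 2 ^ n = (D/2)/2^n + (η/8)/2^n := add_div _ _ _
      rw [h4] at h7
      linarith
    · -- recurse on (m, v) with ρ' = ρ - D/2
      obtain ⟨w, hw1, hw2⟩ := ih m v (ρ - D/2) (η/8) (by linarith) (by linarith)
      have h1 : dist u w ≤ dist u m + dist m w := dist_triangle u m w
      refine ⟨w, by linarith, ?_⟩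
      have h2 : max (dist m v - (ρ - D/2)) 0 ≤ max (D - ρ) 0 + η/8 := by
        apply max_le ?_ (by positivity)
        have h8 : dist m v - (ρ - D/2) ≤ (D - ρ) + η/8 := by
          rw [dist_comm m v]; linarith
        have h6 : D - ρ ≤ max (D - ρ) 0 := le_max_left _ _
        linarith
      have h3 : dist m v / 2 ^ n ≤ (D/2 + η/8) / 2 ^ n := by
        apply div_le_div_of_nonneg_right ?_ (by positivity)
        rw [dist_comm m v]; exact hm2
      have h5 : (η/8) / 2 ^ n ≤ η/8 :=
        div_le_self (by linarith) (one_le_pow₀ (by norm_num))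
      have h7 : (D/2 + η/8) / 2 ^ n = D / 2^(n+1) + (η/8)/2^n := by ring
      linarith

lemma approx_point' {M : Type*} [MetricSpace M]
    (hmid : ∀ x y : M, ∀ ε : ℝ, 0 < ε →
      ∃ z : M, dist x z ≤ dist x y / 2 + ε ∧ dist y z ≤ dist x y / 2 + ε)
    (u v : M) (ρ η : ℝ) (hρ : 0 ≤ ρ) (hη : 0 < η) :
    ∃ w : M, dist u w ≤ ρ + η ∧ dist v w ≤ max (dist u v - ρ) 0 + η := by
  obtain ⟨n, hn⟩ : ∃ n : ℕ, ((1:ℝ)/2) ^ n < (η/2) / (dist u v + 1) := by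
    apply exists_pow_lt_of_lt_one (by positivity) (by norm_num)
  obtain ⟨w, hw1, hw2⟩ := approx_point hmid n u v ρ (η/2) hρ (by linarith)
  refine ⟨w, by linarith, ?_⟩
  have hD0 : (0:ℝ) ≤ dist u v := dist_nonneg
  have key : dist u v / 2 ^ n ≤ η/2 := by
    have h1 : dist u v / 2 ^ n = dist u v * (1/2)^n := by
      rw [div_pow, one_pow]; ring
    rw [h1]
    calc dist u v * (1/2)^n ≤ (dist u v + 1) * ((η/2)/(dist u v + 1)) := by
          apply mul_le_mul (by linarith) (le_of_lt hn) (by positivity) (by linarith)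
      _ = η/2 := by field_simp
  linarith

theorem stmt10 {M : Type*} [MetricSpace M] [CompleteSpace M]
    (hmid : ∀ x y : M, ∀ ε : ℝ, 0 < ε →
      ∃ z : M, dist x z ≤ dist x y / 2 + ε ∧ dist y z ≤ dist x y / 2 + ε)
    (hfbip : ∀ (n : ℕ) (x : Fin n → M) (δ : Fin n → ℝ),
      (∀ i j, (Metric.closedBall (x i) (δ i) ∩ Metric.closedBall (x j) (δ j)).Nonempty) →
      (⋂ i, Metric.closedBall (x i) (δ i)).Nonempty) :
    ∀ x y : M, ∃ z : M, dist x z = dist x y / 2 ∧ dist y z = dist x y / 2 := by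
  intro x y
  set d := dist x y with hd
  have hd0 : 0 ≤ d := dist_nonneg
  -- the invariant
  set P : ℕ → M → Prop := fun n w => dist x w ≤ d/2 + (1/2)^n ∧ dist y w ≤ d/2 + (1/2)^n
    with hP
  -- initial point
  obtain ⟨w0, hw01, hw02⟩ := hmid x y 1 one_pos
  have hz0 : P 0 w0 := by constructor <;> simpa using ‹_›
  -- recursive step via the finite binary intersection property
  have step : ∀ (n : ℕ) (w : M), P n w →
      ∃ w' : M, P (n+1) w' ∧ dist w w' ≤ (3/2) * (1/2)^n := by
    intro n w hw
    obtain ⟨hwx, hwy⟩ := hw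
    have hpow : (0:ℝ) < (1/2)^(n+1) := by positivity
    have hpow' : (0:ℝ) < (1/2)^n := by positivity
    set r : ℝ := d/2 + (1/2)^(n+1) with hr
    set c : ℝ := (3/2) * (1/2)^n with hc
    have hr0 : 0 ≤ r := by positivity
    have hc0 : 0 ≤ c := by positivity
    -- witnesses for pairwise intersections
    obtain ⟨mxy, hmxy1, hmxy2⟩ := hmid x y ((1/2)^(n+1)) hpow
    obtain ⟨mxw, hmxw1, hmxw2⟩ :=
      approx_point' hmid x w (d/2) ((1/2)^(n+1)) (by linarith) hpow
    obtain ⟨myw, hmyw1, hmyw2⟩ :=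
      approx_point' hmid y w (d/2) ((1/2)^(n+1)) (by linarith) hpow
    have hxw : dist w mxw ≤ c := by
      have h1 : max (dist x w - d/2) 0 ≤ (1/2)^n := max_le (by linarith) (by positivity)
      have h2 : ((1:ℝ)/2)^(n+1) = (1/2) * (1/2)^n := by ring
      rw [hc]; rw [h2] at hmxw2; linarith
    have hyw : dist w myw ≤ c := by
      have h1 : max (dist y w - d/2) 0 ≤ (1/2)^n := max_le (by linarith) (by positivity)
      have h2 : ((1:ℝ)/2)^(n+1) = (1/2) * (1/2)^n := by ring
      rw [hc]; rw [h2] at hmyw2; linarith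
    have hpair : ∀ i j : Fin 3, (Metric.closedBall (![x,y,w] i) (![r,r,c] i) ∩
        Metric.closedBall (![x,y,w] j) (![r,r,c] j)).Nonempty := by
      intro i j
      fin_cases i <;> fin_cases j <;> simp only [Fin.zero_eta, Fin.mk_one, Fin.reduceFinMk,
        Matrix.cons_val_zero, Matrix.cons_val_one, Matrix.head_cons, Matrix.cons_val_two,
        Matrix.tail_cons]
      · exact ⟨x, Metric.mem_closedBall.2 (by simp [hr0]), Metric.mem_closedBall.2 (by simp [hr0])⟩
      · exact ⟨mxy, Metric.mem_closedBall.2 (by rw [dist_comm]; exact hmxy1),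
          Metric.mem_closedBall.2 (by rw [dist_comm]; exact hmxy2)⟩
      · exact ⟨mxw, Metric.mem_closedBall.2 (by rw [dist_comm]; exact hmxw1),
          Metric.mem_closedBall.2 (by rw [dist_comm]; exact hxw)⟩
      · exact ⟨mxy, Metric.mem_closedBall.2 (by rw [dist_comm]; exact hmxy2),
          Metric.mem_closedBall.2 (by rw [dist_comm]; exact hmxy1)⟩
      · exact ⟨y, Metric.mem_closedBall.2 (by simp [hr0]), Metric.mem_closedBall.2 (by simp [hr0])⟩
      · exact ⟨myw, Metric.mem_closedBall.2 (by rw [dist_comm]; exact hmyw1),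
          Metric.mem_closedBall.2 (by rw [dist_comm]; exact hyw)⟩
      · exact ⟨mxw, Metric.mem_closedBall.2 (by rw [dist_comm]; exact hxw),
          Metric.mem_closedBall.2 (by rw [dist_comm]; exact hmxw1)⟩
      · exact ⟨myw, Metric.mem_closedBall.2 (by rw [dist_comm]; exact hyw),
          Metric.mem_closedBall.2 (by rw [dist_comm]; exact hmyw1)⟩
      · exact ⟨w, Metric.mem_closedBall.2 (by simp [hc0]), Metric.mem_closedBall.2 (by simp [hc0])⟩
    obtain ⟨w', hw'⟩ := hfbip 3 ![x, y, w] ![r, r, c] hpair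
    · simp only [Set.mem_iInter] at hw'
      have h0 := hw' 0
      have h1 := hw' 1
      have h2 := hw' 2
      simp only [Fin.zero_eta, Fin.mk_one, Fin.reduceFinMk, Matrix.cons_val_zero,
        Matrix.cons_val_one, Matrix.head_cons, Matrix.cons_val_two, Matrix.tail_cons,
        Metric.mem_closedBall] at h0 h1 h2
      exact ⟨w', ⟨by rw [dist_comm]; exact h0, by rw [dist_comm]; exact h1⟩,
        by rw [dist_comm]; exact h2⟩
  -- build the Cauchy sequence
  let F : ∀ n : ℕ, {w : M // P n w} → {w : M // P (n+1) w} := fun n p =>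
    ⟨(step n p.1 p.2).choose, (step n p.1 p.2).choose_spec.1⟩
  let z : ∀ n : ℕ, {w : M // P n w} := fun n => Nat.rec ⟨w0, hz0⟩ F n
  have hlink : ∀ n, dist (z n).1 (z (n+1)).1 ≤ (3/2) * (1/2)^n := by
    intro n
    have : z (n+1) = F n (z n) := rfl
    rw [this]
    exact (step n (z n).1 (z n).2).choose_spec.2
  have hcauchy : CauchySeq (fun n => (z n).1) :=
    cauchySeq_of_le_geometric (1/2) (3/2) (by norm_num) hlink
  obtain ⟨l, hl⟩ := cauchySeq_tendsto_of_complete hcauchy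
  have htends : Filter.Tendsto (fun n : ℕ => d/2 + (1/2)^n) Filter.atTop (nhds (d/2)) := by
    have := tendsto_pow_atTop_nhds_zero_of_lt_one (by norm_num : (0:ℝ) ≤ 1/2)
      (by norm_num : (1:ℝ)/2 < 1)
    simpa using (tendsto_const_nhds (x := d/2)).add this
  have hx : dist x l ≤ d/2 :=
    le_of_tendsto_of_tendsto' ((tendsto_const_nhds.dist hl)) htends
      (fun n => (z n).2.1)
  have hy : dist y l ≤ d/2 :=
    le_of_tendsto_of_tendsto' ((tendsto_const_nhds.dist hl)) htends
      (fun n => (z n).2.2)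
  have htri : d ≤ dist x l + dist y l := by
    rw [hd]; rw [dist_comm y l]; exact dist_triangle x l y
  exact ⟨l, by linarith, by linarith⟩
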